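/- The total number of parts over all partitions fitting in a t×s box with t + s ≤ n − 1 equals the total number of parts over all partitions with distinct parts at most n − 2. -/

import Mathlib

/-- A restricted growth function of length `n`: `w 0 = 1` and each later entry is
at most one more than the maximum of the preceding entries. -/
def IsRGF {n : ℕ} (w : Fin n → ℕ) : Prop :=
  (∀ i : Fin n, (i : ℕ) = 0 → w i = 1) ∧
  (∀ i : Fin n, 0 < (i : ℕ) →
    w i ≤ 1 + (Finset.univ.filter (fun j : Fin n => j < i)).sup w)

/-- Number of copies of the pattern 112 in `w`. -/
def copies112 {n : ℕ} (w : Fin n → ℕ) : ℕ :=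
  ((Finset.univ : Finset (Fin n × Fin n × Fin n)).filter
    (fun t => t.1 < t.2.1 ∧ t.2.1 < t.2.2 ∧ w t.1 = w t.2.1 ∧ w t.2.1 < w t.2.2)).card

/-- Number of copies of the pattern 122 in `w`. -/
def copies122 {n : ℕ} (w : Fin n → ℕ) : ℕ :=
  ((Finset.univ : Finset (Fin n × Fin n × Fin n)).filter
    (fun t => t.1 < t.2.1 ∧ t.2.1 < t.2.2 ∧ w t.1 < w t.2.1 ∧ w t.2.1 = w t.2.2)).card

/-- `ls` statistic: for each position, the number of distinct values to its left
that are smaller, summed over all positions. -/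
def lsStat {n : ℕ} (w : Fin n → ℕ) : ℕ :=
  ∑ i : Fin n, ((Finset.univ.filter (fun j : Fin n => j < i ∧ w j < w i)).image w).card

/-- `rb` statistic: distinct values to the right that are bigger, summed. -/
def rbStat {n : ℕ} (w : Fin n → ℕ) : ℕ :=
  ∑ i : Fin n, ((Finset.univ.filter (fun j : Fin n => i < j ∧ w i < w j)).image w).card

/-- `lb` statistic: distinct values to the left that are bigger, summed. -/
def lbStat {n : ℕ} (w : Fin n → ℕ) : ℕ :=
  ∑ i : Fin n, ((Finset.univ.filter (fun j : Fin n => j < i ∧ w i < w j)).image w).card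

namespace Stmt13Aux

def toD (l : List ℕ) : List ℕ := l.zipWith (· + ·) (List.range l.length)
def frD (l : List ℕ) : List ℕ := l.zipWith (· - ·) (List.range l.length)

@[simp] lemma length_toD (l : List ℕ) : (toD l).length = l.length := by simp [toD]
@[simp] lemma length_frD (l : List ℕ) : (frD l).length = l.length := by simp [frD]

lemma getElem_toD (l : List ℕ) (i : ℕ) (h : i < (toD l).length) :
    (toD l)[i] = l[i]'(by simpa using h) + i := by
  simp [toD, List.getElem_zipWith]

lemma getElem_frD (l : List ℕ) (i : ℕ) (h : i < (frD l).length) :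
    (frD l)[i] = l[i]'(by simpa using h) - i := by
  simp [frD, List.getElem_zipWith]

lemma frD_toD (l : List ℕ) : frD (toD l) = l := by
  apply List.ext_getElem (by simp)
  intro i h1 h2
  rw [getElem_frD, getElem_toD]
  omega

lemma staircase {l : List ℕ} (hl : l.Pairwise (· < ·)) :
    ∀ d i (h : i + d < l.length), l[i]'(by omega) + d ≤ l[i + d] := by
  intro d
  induction d with
  | zero => simp
  | succ d ih =>
    intro i h
    have h1 := ih i (by omega)
    have h2 : l[i + d]'(by omega) < l[i + d + 1]'(by omega) :=
      List.pairwise_iff_getElem.mp hl (i + d) (i + d + 1) (by omega) (by omega) (by omega)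
    have h3 : l[i + (d + 1)]'(by omega) = l[i + d + 1]'(by omega) := rfl
    omega

lemma toD_sorted {l : List ℕ} (hl : l.Pairwise (· ≤ ·)) : (toD l).Pairwise (· < ·) := by
  rw [List.pairwise_iff_getElem]
  intro i j hi hj hij
  rw [getElem_toD, getElem_toD]
  have := List.pairwise_iff_getElem.mp hl i j (by simpa using hi) (by simpa using hj) hij
  omega

lemma frD_sorted {l : List ℕ} (hl : l.Pairwise (· < ·)) : (frD l).Pairwise (· ≤ ·) := by
  rw [List.pairwise_iff_getElem]
  intro i j hi hj hij
  simp only [length_frD] at hi hj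
  rw [getElem_frD, getElem_frD]
  obtain ⟨d, rfl⟩ : ∃ d, j = i + d := ⟨j - i, by omega⟩
  have := staircase hl d i (by omega)
  omega

lemma ge_rank {l : List ℕ} (hl : l.Pairwise (· < ·)) (h1 : ∀ x ∈ l, 1 ≤ x)
    (i : ℕ) (h : i < l.length) : i + 1 ≤ l[i] := by
  have h2 := staircase hl i 0 (by omega)
  simp only [Nat.zero_add] at h2
  have h0 : 1 ≤ l[0]'(by omega) := h1 _ (List.getElem_mem _)
  omega

lemma toD_frD {l : List ℕ} (hl : l.Pairwise (· < ·)) (h1 : ∀ x ∈ l, 1 ≤ x) :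
    toD (frD l) = l := by
  apply List.ext_getElem (by simp)
  intro i hi h2
  rw [getElem_toD, getElem_frD]
  have := ge_rank hl h1 i h2
  omega

def fS (μ : Multiset ℕ) : Finset ℕ := (toD (μ.sort (· ≤ ·))).toFinset
def gM (S : Finset ℕ) : Multiset ℕ := ↑(frD (S.sort (· ≤ ·)))

lemma toD_sort_nodup (μ : Multiset ℕ) : (toD (μ.sort (· ≤ ·))).Nodup :=
  (toD_sorted (Multiset.pairwise_sort μ _)).nodup

lemma card_fS (μ : Multiset ℕ) : (fS μ).card = Multiset.card μ := by
  rw [fS, List.toFinset_card_of_nodup (toD_sort_nodup μ)]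
  simp

@[simp] lemma card_gM (S : Finset ℕ) : Multiset.card (gM S) = S.card := by
  simp [gM]

lemma sort_fS (μ : Multiset ℕ) : (fS μ).sort (· ≤ ·) = toD (μ.sort (· ≤ ·)) := by
  apply List.Perm.eq_of_pairwise' (Finset.pairwise_sort _ _)
    ((toD_sorted (Multiset.pairwise_sort μ _)).imp (fun h => le_of_lt h))
  rw [← Multiset.coe_eq_coe, Finset.sort_eq]
  show (toD (μ.sort (· ≤ ·))).toFinset.val = _
  rw [List.toFinset, Multiset.toFinset_val]
  exact congrArg _ (List.dedup_eq_self.2 (toD_sort_nodup μ))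

lemma gM_fS (μ : Multiset ℕ) : gM (fS μ) = μ := by
  rw [gM, sort_fS, frD_toD, Multiset.sort_eq]

lemma sort_gM (S : Finset ℕ) : (gM S).sort (· ≤ ·) = frD (S.sort (· ≤ ·)) := by
  apply List.Perm.eq_of_pairwise' (Multiset.pairwise_sort _ _) (frD_sorted (Finset.sortedLT_sort S).pairwise)
  rw [← Multiset.coe_eq_coe, Multiset.sort_eq]
  rfl

lemma fS_gM {S : Finset ℕ} (h1 : ∀ x ∈ S, 1 ≤ x) : fS (gM S) = S := by
  rw [fS, sort_gM, toD_frD ((Finset.sortedLT_sort S).pairwise)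
    (fun x hx => h1 x ((Finset.mem_sort _).mp hx)), Finset.sort_toFinset]

lemma fS_subset {n : ℕ} {μ : Multiset ℕ} (hpos : ∀ x ∈ μ, 0 < x)
    (hcard : Multiset.card μ + μ.sup + 1 ≤ n) (hne : 1 ≤ Multiset.card μ) :
    fS μ ⊆ Finset.Icc 1 (n - 2) := by
  intro x hx
  rw [fS, List.mem_toFinset, List.mem_iff_getElem] at hx
  obtain ⟨j, hj, hx⟩ := hx
  rw [getElem_toD] at hx
  have hj' : j < (μ.sort (· ≤ ·)).length := by simpa using hj
  have hmem : (μ.sort (· ≤ ·))[j] ∈ μ := by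
    rw [← Multiset.mem_sort (· ≤ ·)]
    exact List.getElem_mem _
  have h1 := hpos _ hmem
  have h2 := Multiset.le_sup hmem
  have h3 : (μ.sort (· ≤ ·)).length = Multiset.card μ := Multiset.length_sort _
  rw [Finset.mem_Icc]
  omega

lemma sort_ge_one {S : Finset ℕ} {m : ℕ} (h1 : S ⊆ Finset.Icc 1 m) :
    ∀ x ∈ S.sort (· ≤ ·), 1 ≤ x := by
  intro x hx
  have := h1 ((Finset.mem_sort _).mp hx)
  exact (Finset.mem_Icc.mp this).1

lemma gM_pos {S : Finset ℕ} {m : ℕ} (h1 : S ⊆ Finset.Icc 1 m) :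
    ∀ x ∈ gM S, 0 < x := by
  intro x hx
  rw [gM, Multiset.mem_coe, List.mem_iff_getElem] at hx
  obtain ⟨j, hj, hx⟩ := hx
  rw [getElem_frD] at hx
  have := ge_rank ((Finset.sortedLT_sort S).pairwise) (sort_ge_one h1) j (by simpa using hj)
  omega

lemma gM_bound {n : ℕ} {S : Finset ℕ} (h1 : S ⊆ Finset.Icc 1 (n - 2))
    (hne : 1 ≤ S.card) :
    Multiset.card (gM S) + (gM S).sup + 1 ≤ n := by
  have hlen : (S.sort (· ≤ ·)).length = S.card := Finset.length_sort _
  have hk : S.card ≤ n - 2 := by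
    have hmem : (S.sort (· ≤ ·))[S.card - 1]'(by omega) ∈ S :=
      (Finset.mem_sort (α := ℕ) (· ≤ ·)).mp (List.getElem_mem _)
    have h2 := (Finset.mem_Icc.mp (h1 hmem)).2
    have h3 := ge_rank ((Finset.sortedLT_sort S).pairwise) (sort_ge_one h1) (S.card - 1) (by omega)
    omega
  have hsup : (gM S).sup ≤ n - 1 - S.card := by
    rw [Multiset.sup_le]
    intro x hx
    rw [gM, Multiset.mem_coe, List.mem_iff_getElem] at hx
    obtain ⟨j, hj, hx⟩ := hx
    have hj' : j < (S.sort (· ≤ ·)).length := by simpa using hj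
    rw [getElem_frD] at hx
    have hst := staircase ((Finset.sortedLT_sort S).pairwise) (S.card - 1 - j) j (by omega)
    have hmem : (S.sort (· ≤ ·))[j + (S.card - 1 - j)]'(by omega) ∈ S :=
      (Finset.mem_sort (α := ℕ) (· ≤ ·)).mp (List.getElem_mem _)
    have h2 := (Finset.mem_Icc.mp (h1 hmem)).2
    have h3 := ge_rank ((Finset.sortedLT_sort S).pairwise) (sort_ge_one h1) j hj'
    omega
  have hc : Multiset.card (gM S) = S.card := card_gM S
  omega

end Stmt13Aux

open Stmt13Aux in
/-- The total number of parts over all partitions fitting in a `t×s` box with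
`t + s ≤ n - 1` equals the total number of parts over all partitions with
distinct parts at most `n - 2`. -/
theorem stmt_13 (n : ℕ) :
    {p : Multiset ℕ × ℕ | (∀ x ∈ p.1, 0 < x) ∧ Multiset.card p.1 + p.1.sup + 1 ≤ n ∧
        1 ≤ p.2 ∧ p.2 ≤ Multiset.card p.1}.ncard =
      ∑ S ∈ (Finset.Icc 1 (n - 2)).powerset, S.card := by
  classical
  have hR : ∑ S ∈ (Finset.Icc 1 (n - 2)).powerset, S.card
      = ((Finset.Icc 1 (n - 2)).powerset.sigma (fun S => Finset.range S.card)).card := by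
    rw [Finset.card_sigma]
    simp
  rw [hR, ← Nat.card_coe_set_eq, ← Nat.card_eq_finsetCard]
  apply Nat.card_congr
  refine
    { toFun := fun p => ⟨⟨fS p.1.1, p.1.2 - 1⟩, ?_⟩
      invFun := fun q => ⟨(gM q.1.1, q.1.2 + 1), ?_⟩
      left_inv := ?_
      right_inv := ?_ }
  · obtain ⟨⟨μ, i⟩, hp⟩ := p
    obtain ⟨hpos, hcard, hi1, hi2⟩ := hp
    dsimp only at hpos hcard hi1 hi2
    show (⟨fS μ, i - 1⟩ : Σ _ : Finset ℕ, ℕ) ∈ _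
    rw [Finset.mem_sigma, Finset.mem_powerset, Finset.mem_range, card_fS]
    refine ⟨fS_subset hpos hcard (le_trans hi1 hi2), ?_⟩
    show i - 1 < Multiset.card μ
    omega
  · obtain ⟨⟨S, j⟩, hq⟩ := q
    rw [Finset.mem_sigma, Finset.mem_powerset, Finset.mem_range] at hq
    dsimp only at hq
    obtain ⟨hS, hj⟩ := hq
    show (∀ x ∈ gM S, 0 < x) ∧ Multiset.card (gM S) + (gM S).sup + 1 ≤ n ∧
      1 ≤ j + 1 ∧ j + 1 ≤ Multiset.card (gM S)
    refine ⟨gM_pos hS, gM_bound hS (by omega), by omega, ?_⟩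
    rw [card_gM]
    omega
  · rintro ⟨⟨μ, i⟩, hp⟩
    obtain ⟨hpos, hcard, hi1, hi2⟩ := hp
    dsimp only at hpos hcard hi1 hi2
    apply Subtype.ext
    show (gM (fS μ), (i - 1) + 1) = (μ, i)
    rw [gM_fS]
    exact Prod.ext rfl (by omega)
  · rintro ⟨⟨S, j⟩, hq⟩
    rw [Finset.mem_sigma, Finset.mem_powerset, Finset.mem_range] at hq
    dsimp only at hq
    apply Subtype.ext
    show (⟨fS (gM S), (j + 1) - 1⟩ : Σ _ : Finset ℕ, ℕ) = ⟨S, j⟩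
    have h1 : ∀ x ∈ S, 1 ≤ x := fun x hx => (Finset.mem_Icc.mp (hq.1 hx)).1
    rw [fS_gM h1]
    norm_num
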